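/- Let 0 < α < 1, a_i = (i+1)^{1-α} - i^{1-α}, and p_n defined by p_0 = 1, p_n = Σ_{j=1}^{n}(a_{j-1} - a_j) p_{n-j} for n ≥ 1. Then for all integers n ≥ 1 and 1 ≤ k ≤ n, the complementary convolution identity Σ_{j=k}^{n} p_{n-j} a_{j-k} = 1 holds. -/

import Mathlib

noncomputable def L1a (α : ℝ) (i : ℕ) : ℝ := ((i : ℝ) + 1) ^ (1 - α) - (i : ℝ) ^ (1 - α)

noncomputable def L1p (α : ℝ) : ℕ → ℝ
  | 0 => 1
  | n + 1 => ∑ j : Fin (n + 1), (L1a α j - L1a α (j + 1)) * L1p α (n - j)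

lemma L1a_zero (α : ℝ) (hα1 : α < 1) : L1a α 0 = 1 := by
  simp only [L1a, Nat.cast_zero, zero_add, Real.one_rpow]
  rw [Real.zero_rpow (by linarith)]
  ring

lemma L1key (α : ℝ) (hα1 : α < 1) (m : ℕ) :
    ∑ i ∈ Finset.range (m + 1), L1p α (m - i) * L1a α i = 1 := by
  induction m with
  | zero => simp [L1p, L1a_zero α hα1]
  | succ m ih =>
    rw [Finset.sum_range_succ']
    have hp : L1p α (m + 1) = ∑ j ∈ Finset.range (m + 1),
        (L1a α j - L1a α (j + 1)) * L1p α (m - j) := by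
      rw [L1p, Fin.sum_univ_eq_sum_range (fun j => (L1a α j - L1a α (j + 1)) * L1p α (m - j))]
    have h0 : L1p α (m + 1 - 0) * L1a α 0 = L1p α (m + 1) := by
      rw [L1a_zero α hα1, Nat.sub_zero]; ring
    rw [h0, hp, ← ih, ← Finset.sum_add_distrib]
    apply Finset.sum_congr rfl
    intro i hi
    have : m + 1 - (i + 1) = m - i := by omega
    rw [this]
    ring

theorem L1p_complementary (α : ℝ) (hα0 : 0 < α) (hα1 : α < 1) (n k : ℕ)
    (hk1 : 1 ≤ k) (hkn : k ≤ n) :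
    ∑ j ∈ Finset.Icc k n, L1p α (n - j) * L1a α (j - k) = 1 := by
  rw [← Finset.Ico_add_one_right_eq_Icc, Finset.sum_Ico_eq_sum_range]
  have h1 : n + 1 - k = (n - k) + 1 := by omega
  rw [h1]
  have := L1key α hα1 (n - k)
  rw [← this]
  apply Finset.sum_congr rfl
  intro i hi
  have h2 : n - (k + i) = (n - k) - i := by omega
  have h3 : k + i - k = i := by omega
  rw [h2, h3]
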